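/- Let c₁ ∈ (0, λ) and c₂ ∈ ℝ. The solution of the ODE f'' = (c₁² + c₂ φ² e^{2λt}) f with f(0) = 0, f'(0) = 1, expanded to second order in the parameter φ, is f(t) = f₀(t) + (φ²/2) f₂(t) + o(φ²), where f₀(t) = sinh(c₁ t)/c₁ and f₂(t) = (c₂ e^{λt}/(λ c₁ (λ² − c₁²))) · (λ sinh(c₁ t) cosh(λt) − c₁ cosh(c₁ t) sinh(λt)). Equivalently: f₀'' = c₁² f₀ with f₀(0)=0, f₀'(0)=1 has solution f₀(t) = sinh(c₁ t)/c₁, and f₂'' = c₁² f₂ + 2 c₂ e^{2λt} f₀ with f₂(0) = f₂'(0) = 0 has the stated solution f₂. -/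

import Mathlib

open Real

noncomputable def Gfam (lam c₁ p q r s : ℝ) (t : ℝ) : ℝ :=
  Real.exp (lam * t) *
    ((p * sinh (c₁ * t) * cosh (lam * t) + q * cosh (c₁ * t) * sinh (lam * t))
      + (r * sinh (c₁ * t) * sinh (lam * t) + s * cosh (c₁ * t) * cosh (lam * t)))

lemma hasDerivAt_mul_const' (c t : ℝ) : HasDerivAt (fun x : ℝ => c * x) c t := by
  simpa using (hasDerivAt_id t).const_mul c

lemma hd_sinh (c t : ℝ) :
    HasDerivAt (fun t => Real.sinh (c * t)) (c * Real.cosh (c * t)) t := by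
  exact ((Real.hasDerivAt_sinh (c * t)).comp t (hasDerivAt_mul_const' c t)).congr_deriv (mul_comm _ _)

lemma hd_cosh (c t : ℝ) :
    HasDerivAt (fun t => Real.cosh (c * t)) (c * Real.sinh (c * t)) t := by
  exact ((Real.hasDerivAt_cosh (c * t)).comp t (hasDerivAt_mul_const' c t)).congr_deriv (mul_comm _ _)

lemma hd_exp (c t : ℝ) :
    HasDerivAt (fun t => Real.exp (c * t)) (c * Real.exp (c * t)) t := by
  exact ((Real.hasDerivAt_exp (c * t)).comp t (hasDerivAt_mul_const' c t)).congr_deriv (mul_comm _ _)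

lemma hd_G (lam c₁ p q r s t : ℝ) :
    HasDerivAt (Gfam lam c₁ p q r s)
      (Gfam lam c₁ (lam * p + lam * r + c₁ * s) (lam * q + c₁ * r + lam * s)
        (lam * r + c₁ * q + lam * p) (lam * s + c₁ * p + lam * q) t) t := by
  have h := (hd_exp lam t).mul
      (((((hd_sinh c₁ t).const_mul p).mul (hd_cosh lam t)).add
        (((hd_cosh c₁ t).const_mul q).mul (hd_sinh lam t))).add
        ((((hd_sinh c₁ t).const_mul r).mul (hd_sinh lam t)).add
          (((hd_cosh c₁ t).const_mul s).mul (hd_cosh lam t))))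
  exact (show HasDerivAt (Gfam lam c₁ p q r s) _ t from h).congr_deriv (by unfold Gfam; simp only [Pi.mul_apply, Pi.add_apply]; ring)

/-- The coefficients `f₀, f₂` of the second-order (in `φ`) expansion of the solution of
`f'' = (c₁² + c₂ φ² e^{2λt}) f`, `f(0)=0`, `f'(0)=1`:
`f₀'' = c₁² f₀`, `f₀(0)=0`, `f₀'(0)=1`, and `f₂'' = c₁² f₂ + 2 c₂ e^{2λt} f₀`,
`f₂(0)=f₂'(0)=0`, with the stated explicit solutions. -/
theorem f0_f2_ode (lam c₁ c₂ : ℝ) (hc₁ : 0 < c₁) (hlt : c₁ < lam) :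
    let f₀ : ℝ → ℝ := fun t => sinh (c₁ * t) / c₁
    let f₂ : ℝ → ℝ := fun t =>
      c₂ * Real.exp (lam * t) / (lam * c₁ * (lam ^ 2 - c₁ ^ 2)) *
        (lam * sinh (c₁ * t) * cosh (lam * t) - c₁ * cosh (c₁ * t) * sinh (lam * t))
    (∀ t, deriv (deriv f₀) t = c₁ ^ 2 * f₀ t) ∧ f₀ 0 = 0 ∧ deriv f₀ 0 = 1 ∧
      (∀ t, deriv (deriv f₂) t =
        c₁ ^ 2 * f₂ t + 2 * c₂ * Real.exp (2 * lam * t) * f₀ t) ∧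
      f₂ 0 = 0 ∧ deriv f₂ 0 = 0 := by
  intro f₀ f₂
  have hc₁' : c₁ ≠ 0 := ne_of_gt hc₁
  have hlam : lam ≠ 0 := ne_of_gt (hc₁.trans hlt)
  have hsq : lam ^ 2 - c₁ ^ 2 ≠ 0 := by
    have : c₁ ^ 2 < lam ^ 2 := by nlinarith
    linarith
  -- f₀ derivatives
  have hd₀ : deriv f₀ = fun t => cosh (c₁ * t) := by
    funext t
    have h := ((hd_sinh c₁ t).div_const c₁).congr_deriv
      (show c₁ * cosh (c₁ * t) / c₁ = cosh (c₁ * t) by field_simp)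
    exact h.deriv
  -- f₂ as a member of the family
  set A : ℝ := c₂ / (lam * c₁ * (lam ^ 2 - c₁ ^ 2)) with hA
  have hf₂ : f₂ = fun t => A * Gfam lam c₁ lam (-c₁) 0 0 t := by
    funext t; show c₂ * Real.exp (lam * t) / (lam * c₁ * (lam ^ 2 - c₁ ^ 2)) *
        (lam * sinh (c₁ * t) * cosh (lam * t) - c₁ * cosh (c₁ * t) * sinh (lam * t))
      = A * Gfam lam c₁ lam (-c₁) 0 0 t
    rw [hA]; unfold Gfam; ring
  have hd₂ : deriv f₂ = fun t =>
      A * Gfam lam c₁ (lam * lam + lam * 0 + c₁ * 0) (lam * (-c₁) + c₁ * 0 + lam * 0)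
        (lam * 0 + c₁ * (-c₁) + lam * lam) (lam * 0 + c₁ * lam + lam * (-c₁)) t := by
    rw [hf₂]; funext t
    exact ((hd_G lam c₁ lam (-c₁) 0 0 t).const_mul A).deriv
  refine ⟨?_, by simp [f₀], by simp [hd₀], ?_, by simp [f₂], ?_⟩
  · intro t
    rw [hd₀]
    have h2 : deriv (fun t => cosh (c₁ * t)) t = c₁ * sinh (c₁ * t) := (hd_cosh c₁ t).deriv
    rw [h2]
    show c₁ * sinh (c₁ * t) = c₁ ^ 2 * (sinh (c₁ * t) / c₁)
    field_simp
  · intro t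
    rw [hd₂]
    have h2 := ((hd_G lam c₁ (lam * lam + lam * 0 + c₁ * 0) (lam * (-c₁) + c₁ * 0 + lam * 0)
        (lam * 0 + c₁ * (-c₁) + lam * lam) (lam * 0 + c₁ * lam + lam * (-c₁)) t).const_mul A).deriv
    rw [h2, hf₂]
    show A * Gfam lam c₁ _ _ _ _ t = c₁ ^ 2 * (A * Gfam lam c₁ lam (-c₁) 0 0 t)
        + 2 * c₂ * Real.exp (2 * lam * t) * (sinh (c₁ * t) / c₁)
    rw [hA]
    unfold Gfam
    rw [show 2 * lam * t = lam * t + lam * t by ring, Real.exp_add]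
    generalize hg : Real.exp (lam * t) = E
    have hE : E = cosh (lam * t) + sinh (lam * t) := by
      rw [← hg]; exact (Real.cosh_add_sinh _).symm
    field_simp
    rw [hE]
    ring
  · rw [hd₂]
    simp [Gfam]
    exact Or.inr (by ring)
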